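/- (Silcock) Suppose every group H_λ (λ ∈ Λ) is a nonabelian simple group. Then every normal subgroup N of H_Λ = Wr_{λ∈Λ} H_λ is equal to D_Γ for some downward closed subset Γ ⊆ Λ (Γ is downward closed if γ ∈ Γ and λ ≤ γ imply λ ∈ Γ). -/

import Mathlib

open scoped Classical
set_option linter.unusedSectionVars false

noncomputable section

namespace GW

/-- The support of an element of a dependent product of groups. -/
def supp {Λ : Type*} {H : Λ → Type*} [∀ l, One (H l)] (x : ∀ l, H l) : Set Λ :=
  {l | x l ≠ 1}

/-- The restricted direct product: functions with finite support. -/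
abbrev S (Λ : Type*) (H : Λ → Type*) [∀ l, One (H l)] : Type _ :=
  {x : ∀ l, H l // (supp x).Finite}

variable {Λ : Type*} [PartialOrder Λ] (H : Λ → Type*) [∀ l, Group (H l)]

/-- The underlying function of the permutation `ξ_h`. -/
def xiFun (l : Λ) (h : H l) (x : ∀ m, H m) : ∀ m, H m :=
  Function.update x l (if ∀ n, l < n → x n = 1 then h * x l else x l)

lemma xiFun_apply_ne (l : Λ) (h : H l) (x : ∀ m, H m) {m : Λ} (hm : m ≠ l) :
    xiFun H l h x m = x m := Function.update_of_ne hm _ x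

lemma xiFun_support (l : Λ) (h : H l) (x : ∀ m, H m) :
    supp (xiFun H l h x) ⊆ insert l (supp x) := by
  intro m hm
  rcases eq_or_ne m l with rfl | hne
  · exact Set.mem_insert _ _
  · refine Set.mem_insert_of_mem _ ?_
    have : xiFun H l h x m ≠ 1 := hm
    rwa [xiFun_apply_ne H l h x hne] at this

lemma xiFun_cond (l : Λ) (h : H l) (x : ∀ m, H m) :
    (∀ n, l < n → xiFun H l h x n = 1) ↔ ∀ n, l < n → x n = 1 := by
  constructor
  · intro hc n hn
    have := hc n hn
    rwa [xiFun_apply_ne H l h x hn.ne'] at this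
  · intro hc n hn
    rw [xiFun_apply_ne H l h x hn.ne']
    exact hc n hn

lemma xiFun_inv (l : Λ) (h : H l) (x : ∀ m, H m) :
    xiFun H l h⁻¹ (xiFun H l h x) = x := by
  funext m
  rcases eq_or_ne m l with rfl | hne
  · have hyl : xiFun H m h x m = if ∀ n, m < n → x n = 1 then h * x m else x m := by
      simp [xiFun]
    show Function.update (xiFun H m h x) m
      (if ∀ n, m < n → xiFun H m h x n = 1 then h⁻¹ * xiFun H m h x m
        else xiFun H m h x m) m = x m
    rw [Function.update_self]
    by_cases hc : ∀ n, m < n → x n = 1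
    · rw [if_pos ((xiFun_cond H m h x).2 hc), hyl, if_pos hc, inv_mul_cancel_left]
    · rw [if_neg (fun hcy => hc ((xiFun_cond H m h x).1 hcy)), hyl, if_neg hc]
  · rw [xiFun_apply_ne H l h⁻¹ _ hne, xiFun_apply_ne H l h x hne]

/-- The permutation `ξ_h` of the restricted product `S`. -/
def xi (l : Λ) (h : H l) : Equiv.Perm (S Λ H) where
  toFun x := ⟨xiFun H l h x.1, (x.2.insert l).subset (xiFun_support H l h x.1)⟩
  invFun x := ⟨xiFun H l h⁻¹ x.1, (x.2.insert l).subset (xiFun_support H l h⁻¹ x.1)⟩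
  left_inv x := Subtype.ext (xiFun_inv H l h x.1)
  right_inv x := Subtype.ext (by simpa using xiFun_inv H l h⁻¹ x.1)

/-- The generalized wreath product `Wr_{λ∈Λ} H_λ` as a subgroup of `Perm S`. -/
def Wr (Λ : Type*) [PartialOrder Λ] (H : Λ → Type*) [∀ l, Group (H l)] :
    Subgroup (Equiv.Perm (S Λ H)) :=
  Subgroup.closure {e | ∃ (l : Λ) (h : H l), e = xi H l h}

/-- For `Γ ⊆ Λ`, the subgroup `H_Γ` of `Perm S` generated by the `ξ_h` with `h ∈ H_γ`, `γ ∈ Γ`. -/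
def HSub (Γ : Set Λ) : Subgroup (Equiv.Perm (S Λ H)) :=
  Subgroup.closure {e | ∃ (l : Λ) (h : H l), l ∈ Γ ∧ e = xi H l h}

/-- For `Γ ⊆ Λ`, the subgroup `D_Γ` of `H_Λ` of elements fixing all coordinates outside `Γ`. -/
def D (Γ : Set Λ) : Subgroup ↥(Wr Λ H) where
  carrier := {g | ∀ (x : S Λ H) (l : Λ), l ∉ Γ → ((g : Equiv.Perm (S Λ H)) x).1 l = x.1 l}
  one_mem' := fun _ _ _ => rfl
  mul_mem' := by
    intro a b ha hb x l hl
    have h1 := ha ((b : Equiv.Perm (S Λ H)) x) l hl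
    have h2 := hb x l hl
    simpa [h2] using h1
  inv_mem' := by
    intro a ha x l hl
    have := ha (((a : Equiv.Perm (S Λ H)))⁻¹ x) l hl
    simpa using this.symm

end GW

theorem Equiv.Perm.apply_inv_self {α : Type*} (f : Equiv.Perm α) (x : α) : f (f⁻¹ x) = x :=
  Equiv.apply_symm_apply f x

theorem Equiv.Perm.inv_apply_self {α : Type*} (f : Equiv.Perm α) (x : α) : f⁻¹ (f x) = x :=
  Equiv.symm_apply_apply f x

namespace GW

variable {Λ : Type*} [PartialOrder Λ] {H : Λ → Type*} [∀ l, Group (H l)]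

/-- condition for ξ to act at level l -/
def condA (l : Λ) (x : ∀ m, H m) : Prop := ∀ η, l < η → x η = 1

lemma xiFun_eq (l : Λ) (h : H l) (x : ∀ m, H m) :
    xiFun H l h x = if condA l x then Function.update x l (h * x l) else x := by
  unfold xiFun condA
  by_cases hc : ∀ n, l < n → x n = 1
  · rw [if_pos hc, if_pos hc]
  · rw [if_neg hc, if_neg hc, Function.update_eq_self]

lemma xiFun_of_not (l : Λ) (h : H l) (x : ∀ m, H m) (hc : ¬ condA l x) :
    xiFun H l h x = x := by
  rw [xiFun_eq, if_neg hc]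

lemma xiFun_of_cond (l : Λ) (h : H l) (x : ∀ m, H m) (hc : condA l x) :
    xiFun H l h x = Function.update x l (h * x l) := by
  rw [xiFun_eq, if_pos hc]

lemma xiFun_self (l : Λ) (h : H l) (x : ∀ m, H m) :
    xiFun H l h x l = if condA l x then h * x l else x l := by
  by_cases hc : condA l x
  · rw [xiFun_of_cond l h x hc, if_pos hc, Function.update_self]
  · rw [xiFun_of_not l h x hc, if_neg hc]

lemma condA_xiFun (l : Λ) (h : H l) (x : ∀ m, H m) :
    condA l (xiFun H l h x) ↔ condA l x := xiFun_cond H l h x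

lemma xi_coe (l : Λ) (h : H l) (x : S Λ H) :
    ((xi H l h) x).1 = xiFun H l h x.1 := rfl

lemma xi_apply_ne (l : Λ) (h : H l) (x : S Λ H) {m : Λ} (hm : m ≠ l) :
    ((xi H l h) x).1 m = x.1 m := xiFun_apply_ne H l h x.1 hm

lemma xi_inv (l : Λ) (h : H l) : (xi H l h)⁻¹ = xi H l h⁻¹ :=
  Equiv.ext fun _ => rfl

lemma xi_mul (l : Λ) (h h' : H l) : xi H l h * xi H l h' = xi H l (h * h') := by
  refine Equiv.ext fun x => Subtype.ext (funext fun m => ?_)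
  have hc := condA_xiFun l h' x.1
  rcases eq_or_ne m l with rfl | hne
  · show xiFun H m h (xiFun H m h' x.1) m = xiFun H m (h*h') x.1 m
    rw [xiFun_self, xiFun_self, xiFun_self]
    by_cases hx : condA m x.1
    · rw [if_pos hx, if_pos (hc.2 hx), if_pos hx, mul_assoc]
    · rw [if_neg hx, if_neg (fun hy => hx (hc.1 hy)), if_neg hx]
  · show xiFun H l h (xiFun H l h' x.1) m = xiFun H l (h*h') x.1 m
    rw [xiFun_apply_ne H l h _ hne, xiFun_apply_ne H l h' _ hne,
      xiFun_apply_ne H l (h*h') _ hne]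

lemma xi_one (l : Λ) : xi H l (1 : H l) = 1 := by
  refine Equiv.ext fun x => Subtype.ext (funext fun m => ?_)
  rcases eq_or_ne m l with rfl | hne
  · show xiFun H m 1 x.1 m = x.1 m
    rw [xiFun_self]
    by_cases hx : condA m x.1 <;> simp [hx]
  · exact xiFun_apply_ne H l 1 x.1 hne

lemma xi_mem (l : Λ) (h : H l) : xi H l h ∈ Wr Λ H :=
  Subgroup.subset_closure ⟨l, h, rfl⟩

/-- element ξ as an element of the wreath product subgroup -/
def Xi (l : Λ) (h : H l) : ↥(Wr Λ H) := ⟨xi H l h, xi_mem l h⟩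

lemma Xi_inv (l : Λ) (h : H l) : (Xi l h)⁻¹ = (Xi l h⁻¹ : ↥(Wr Λ H)) :=
  Subtype.ext (xi_inv l h)

lemma Xi_mul (l : Λ) (h h' : H l) : Xi l h * Xi l h' = (Xi l (h * h') : ↥(Wr Λ H)) :=
  Subtype.ext (xi_mul l h h')

lemma Xi_one (l : Λ) : (Xi l (1 : H l) : ↥(Wr Λ H)) = 1 := Subtype.ext (xi_one l)

/-- Master induction principle for the wreath product. -/
lemma wr_ind (P : Equiv.Perm (S Λ H) → Prop)
    (hone : P 1)
    (hxi : ∀ (l : Λ) (h : H l), P (xi H l h))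
    (hmul : ∀ a b, a ∈ Wr Λ H → b ∈ Wr Λ H → P a → P b → P (a * b)) :
    ∀ g ∈ Wr Λ H, P g := by
  intro g hg
  have : P g ∧ P g⁻¹ := by
    refine Subgroup.closure_induction (k := {e | ∃ (l : Λ) (h : H l), e = xi H l h})
      (p := fun q _ => P q ∧ P q⁻¹) ?_ ?_ ?_ ?_ hg
    · rintro x ⟨l, h, rfl⟩
      exact ⟨hxi l h, by rw [xi_inv]; exact hxi l h⁻¹⟩
    · exact ⟨hone, by simpa using hone⟩
    · intro x y hx hy hPx hPy
      have hxW : x ∈ Wr Λ H := hx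
      have hyW : y ∈ Wr Λ H := hy
      refine ⟨hmul x y hxW hyW hPx.1 hPy.1, ?_⟩
      rw [mul_inv_rev]
      exact hmul y⁻¹ x⁻¹ (inv_mem hyW) (inv_mem hxW) hPy.2 hPx.2
    · intro x _ hPx
      exact ⟨hPx.2, by simpa using hPx.1⟩
  exact this.1


/-! ### Locality lemmas -/

lemma agree_above {g : Equiv.Perm (S Λ H)} (hg : g ∈ Wr Λ H) (l : Λ) {x y : S Λ H}
    (hxy : ∀ η, l < η → x.1 η = y.1 η) :
    (∀ η, l < η → (g x).1 η = (g y).1 η) ∧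
      (g x).1 l * (x.1 l)⁻¹ = (g y).1 l * (y.1 l)⁻¹ := by
  refine wr_ind (fun g => ∀ x y : S Λ H, (∀ η, l < η → x.1 η = y.1 η) →
      (∀ η, l < η → (g x).1 η = (g y).1 η) ∧
      (g x).1 l * (x.1 l)⁻¹ = (g y).1 l * (y.1 l)⁻¹) ?_ ?_ ?_ g hg x y hxy
  · intro x y hxy
    exact ⟨fun η hη => hxy η hη, by simp⟩
  · intro ν h x y hxy
    constructor
    · intro η hη
      rcases eq_or_ne η ν with rfl | hne
      · show xiFun H η h x.1 η = xiFun H η h y.1 η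
        rw [xiFun_self, xiFun_self]
        have hc2 : condA η x.1 ↔ condA η y.1 := by
          constructor
          · intro hc ζ hζ; rw [← hxy ζ (lt_trans hη hζ)]; exact hc ζ hζ
          · intro hc ζ hζ; rw [hxy ζ (lt_trans hη hζ)]; exact hc ζ hζ
        by_cases hc : condA η x.1
        · rw [if_pos hc, if_pos (hc2.1 hc), hxy η hη]
        · rw [if_neg hc, if_neg (fun hy' => hc (hc2.2 hy')), hxy η hη]
      · rw [xi_apply_ne ν h x hne, xi_apply_ne ν h y hne]
        exact hxy η hη
    · rcases eq_or_ne ν l with rfl | hne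
      · show xiFun H ν h x.1 ν * (x.1 ν)⁻¹ = xiFun H ν h y.1 ν * (y.1 ν)⁻¹
        rw [xiFun_self, xiFun_self]
        have hc2 : condA ν x.1 ↔ condA ν y.1 := by
          constructor
          · intro hc ζ hζ; rw [← hxy ζ hζ]; exact hc ζ hζ
          · intro hc ζ hζ; rw [hxy ζ hζ]; exact hc ζ hζ
        by_cases hc : condA ν x.1
        · rw [if_pos hc, if_pos (hc2.1 hc)]; group
        · rw [if_neg hc, if_neg (fun hy' => hc (hc2.2 hy'))]; group
      · rw [xi_apply_ne ν h x (Ne.symm hne), xi_apply_ne ν h y (Ne.symm hne)]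
        group
  · intro a b _ _ Pa Pb x y hxy
    obtain ⟨hb1, hb2⟩ := Pb x y hxy
    obtain ⟨ha1, ha2⟩ := Pa (b x) (b y) hb1
    constructor
    · intro η hη
      show (a (b x)).1 η = (a (b y)).1 η
      exact ha1 η hη
    · show (a (b x)).1 l * (x.1 l)⁻¹ = (a (b y)).1 l * (y.1 l)⁻¹
      calc (a (b x)).1 l * (x.1 l)⁻¹
          = ((a (b x)).1 l * ((b x).1 l)⁻¹) * ((b x).1 l * (x.1 l)⁻¹) := by group
        _ = ((a (b y)).1 l * ((b y).1 l)⁻¹) * ((b y).1 l * (y.1 l)⁻¹) := by rw [ha2, hb2]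
        _ = (a (b y)).1 l * (y.1 l)⁻¹ := by group

lemma agree_ge {g : Equiv.Perm (S Λ H)} (hg : g ∈ Wr Λ H) (l : Λ) {x y : S Λ H}
    (hxy : ∀ η, l ≤ η → x.1 η = y.1 η) :
    ∀ η, l ≤ η → (g x).1 η = (g y).1 η := by
  refine wr_ind (fun g => ∀ x y : S Λ H, (∀ η, l ≤ η → x.1 η = y.1 η) →
      ∀ η, l ≤ η → (g x).1 η = (g y).1 η) ?_ ?_ ?_ g hg x y hxy
  · intro x y hxy η hη; exact hxy η hη
  · intro ν h x y hxy η hη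
    rcases eq_or_ne η ν with rfl | hne
    · show xiFun H η h x.1 η = xiFun H η h y.1 η
      rw [xiFun_self, xiFun_self]
      have hc2 : condA η x.1 ↔ condA η y.1 := by
        constructor
        · intro hc ζ hζ; rw [← hxy ζ (le_of_lt (lt_of_le_of_lt hη hζ))]; exact hc ζ hζ
        · intro hc ζ hζ; rw [hxy ζ (le_of_lt (lt_of_le_of_lt hη hζ))]; exact hc ζ hζ
      by_cases hc : condA η x.1
      · rw [if_pos hc, if_pos (hc2.1 hc), hxy η hη]
      · rw [if_neg hc, if_neg (fun hy' => hc (hc2.2 hy')), hxy η hη]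
    · rw [xi_apply_ne ν h x hne, xi_apply_ne ν h y hne]
      exact hxy η hη
  · intro a b _ _ Pa Pb x y hxy η hη
    show (a (b x)).1 η = (a (b y)).1 η
    exact Pa (b x) (b y) (Pb x y hxy) η hη

/-! ### Moved coordinates -/

def fixesCoord (g : Equiv.Perm (S Λ H)) (l : Λ) : Prop := ∀ x : S Λ H, (g x).1 l = x.1 l

def movesSet (g : Equiv.Perm (S Λ H)) : Set Λ := {l | ¬ fixesCoord g l}

lemma fixesCoord_inv {g : Equiv.Perm (S Λ H)} {l : Λ} (hg : fixesCoord g l) :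
    fixesCoord g⁻¹ l := by
  intro x
  have := hg (g⁻¹ x)
  rw [Equiv.Perm.apply_inv_self] at this
  exact this.symm

lemma movesSet_inv (g : Equiv.Perm (S Λ H)) : movesSet g⁻¹ ⊆ movesSet g := by
  intro l hl hfix
  exact hl (fixesCoord_inv hfix)

lemma movesSet_mul (a b : Equiv.Perm (S Λ H)) : movesSet (a * b) ⊆ movesSet a ∪ movesSet b := by
  intro l hl
  by_contra hc
  simp only [Set.mem_union, movesSet, Set.mem_setOf_eq, not_or, not_not] at hc
  apply hl
  intro x
  show (a (b x)).1 l = x.1 l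
  rw [hc.1 (b x), hc.2 x]

lemma movesSet_xi (l : Λ) (h : H l) : movesSet (xi H l h) ⊆ {l} := by
  intro m hm
  by_contra hne
  simp only [Set.mem_singleton_iff] at hne
  exact hm (fun x => xi_apply_ne l h x hne)

lemma movesSet_finite {g : Equiv.Perm (S Λ H)} (hg : g ∈ Wr Λ H) : (movesSet g).Finite := by
  refine wr_ind (fun g => (movesSet g).Finite) ?_ ?_ ?_ g hg
  · refine Set.Finite.subset (Set.finite_empty) ?_
    intro l hl
    exact hl (fun x => rfl)
  · intro l h
    exact Set.Finite.subset (Set.finite_singleton l) (movesSet_xi l h)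
  · intro a b _ _ ha hb
    exact Set.Finite.subset (ha.union hb) (movesSet_mul a b)

lemma fixes_of_not_mem {g : Equiv.Perm (S Λ H)} {l : Λ} (h : l ∉ movesSet g) :
    fixesCoord g l := not_not.mp h

/-! ### The all-identity point -/

def pt1 : S Λ H :=
  ⟨fun _ => 1, Set.Finite.subset Set.finite_empty (fun _ hl => hl rfl)⟩

@[simp] lemma pt1_coord (l : Λ) : (pt1 : S Λ H).1 l = 1 := rfl

/-! ### Normality of D for downward closed Γ -/

lemma D_conj_aux {Γ : Set Λ} (hΓ : ∀ ⦃g l : Λ⦄, g ∈ Γ → l ≤ g → l ∈ Γ) :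
    ∀ up : Equiv.Perm (S Λ H), up ∈ Wr Λ H →
      ∀ q : Equiv.Perm (S Λ H),
        (∀ (x : S Λ H) (l : Λ), l ∉ Γ → (q x).1 l = x.1 l) →
        (∀ (x : S Λ H) (l : Λ), l ∉ Γ → ((up * q * up⁻¹) x).1 l = x.1 l) := by
  refine wr_ind _ ?_ ?_ ?_
  · intro q hq x l hl
    simpa using hq x l hl
  · intro ν s q hq x l hl
    show ((xi H ν s) (q ((xi H ν s)⁻¹ x))).1 l = x.1 l
    rw [xi_inv]
    set y := (xi H ν s⁻¹) x with hy
    set z := q y with hz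
    have hzy : ∀ m, m ∉ Γ → z.1 m = y.1 m := fun m hm => hq y m hm
    rcases eq_or_ne l ν with rfl | hne
    · have hcz : condA l z.1 ↔ condA l y.1 := by
        constructor
        · intro hc η hη
          rw [← hzy η (fun hmem => hl (hΓ hmem (le_of_lt hη)))]; exact hc η hη
        · intro hc η hη
          rw [hzy η (fun hmem => hl (hΓ hmem (le_of_lt hη)))]; exact hc η hη
      have hcy : condA l y.1 ↔ condA l x.1 := by
        constructor
        · intro hc η hη
          rw [← xi_apply_ne l s⁻¹ x (ne_of_gt hη)]; exact hc η hη
        · intro hc η hη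
          rw [hy]; show xiFun H l s⁻¹ x.1 η = 1
          rw [xiFun_apply_ne H l s⁻¹ x.1 (ne_of_gt hη)]; exact hc η hη
      have hyν : y.1 l = if condA l x.1 then s⁻¹ * x.1 l else x.1 l := xiFun_self l s⁻¹ x.1
      show xiFun H l s z.1 l = x.1 l
      rw [xiFun_self]
      by_cases hcx : condA l x.1
      · rw [if_pos (hcz.2 (hcy.2 hcx)), hzy l hl, hyν, if_pos hcx, mul_inv_cancel_left]
      · rw [if_neg (fun hc => hcx (hcy.1 (hcz.1 hc))), hzy l hl, hyν, if_neg hcx]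
    · show xiFun H ν s z.1 l = x.1 l
      rw [xiFun_apply_ne H ν s z.1 hne, hzy l hl, hy]
      show xiFun H ν s⁻¹ x.1 l = x.1 l
      rw [xiFun_apply_ne H ν s⁻¹ x.1 hne]
  · intro a b _ _ Pa Pb q hq x l hl
    have h1 : ∀ (x : S Λ H) (l : Λ), l ∉ Γ → ((b * q * b⁻¹) x).1 l = x.1 l := Pb q hq
    have h2 := Pa (b * q * b⁻¹) h1 x l hl
    have : (a * b) * q * (a * b)⁻¹ = a * (b * q * b⁻¹) * a⁻¹ := by group
    rw [this]
    exact h2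

lemma D_normal {Γ : Set Λ} (hΓ : ∀ ⦃g l : Λ⦄, g ∈ Γ → l ≤ g → l ∈ Γ) :
    (D H Γ : Subgroup ↥(Wr Λ H)).Normal := by
  constructor
  intro g hg u
  have := D_conj_aux hΓ u.1 u.2 g.1 hg
  intro x l hl
  exact this x l hl

/-! ### Decomposition of the wreath product -/

lemma mem_closure_genAll (g : ↥(Wr Λ H)) :
    g ∈ Subgroup.closure {w : ↥(Wr Λ H) | ∃ (l : Λ) (h : H l), w = Xi l h} := by
  obtain ⟨gp, hgp⟩ := g
  exact wr_ind (fun q => ∀ hq : q ∈ Wr Λ H,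
      (⟨q, hq⟩ : ↥(Wr Λ H)) ∈ Subgroup.closure {w : ↥(Wr Λ H) | ∃ (l : Λ) (h : H l), w = Xi l h})
    (fun hq => by
      have : (⟨1, hq⟩ : ↥(Wr Λ H)) = 1 := Subtype.ext rfl
      rw [this]; exact one_mem _)
    (fun l h hq => Subgroup.subset_closure ⟨l, h, Subtype.ext rfl⟩)
    (fun a b ha hb Pa Pb hq => by
      have : (⟨a * b, hq⟩ : ↥(Wr Λ H)) = ⟨a, ha⟩ * ⟨b, hb⟩ := Subtype.ext rfl
      rw [this]; exact mul_mem (Pa ha) (Pb hb)) gp hgp hgp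

lemma decomp (Γ : Set Λ) (g : ↥(Wr Λ H)) :
    ∃ n ∈ Subgroup.normalClosure {w : ↥(Wr Λ H) | ∃ l ∈ Γ, ∃ h : H l, w = Xi l h},
      ∃ u ∈ Subgroup.closure {w : ↥(Wr Λ H) | ∃ l ∈ (Γᶜ : Set Λ), ∃ h : H l, w = Xi l h},
        g = n * u := by
  set NC := Subgroup.normalClosure {w : ↥(Wr Λ H) | ∃ l ∈ Γ, ∃ h : H l, w = Xi l h} with hNC
  set CC := Subgroup.closure {w : ↥(Wr Λ H) | ∃ l ∈ (Γᶜ : Set Λ), ∃ h : H l, w = Xi l h} with hCC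
  haveI : NC.Normal := Subgroup.normalClosure_normal
  let E : Subgroup ↥(Wr Λ H) :=
    { carrier := {g | ∃ n ∈ NC, ∃ u ∈ CC, g = n * u}
      one_mem' := ⟨1, one_mem _, 1, one_mem _, by simp⟩
      mul_mem' := by
        rintro a b ⟨n1, hn1, u1, hu1, rfl⟩ ⟨n2, hn2, u2, hu2, rfl⟩
        refine ⟨n1 * (u1 * n2 * u1⁻¹), mul_mem hn1 (‹NC.Normal›.conj_mem n2 hn2 u1),
          u1 * u2, mul_mem hu1 hu2, by group⟩
      inv_mem' := by
        rintro a ⟨n, hn, u, hu, rfl⟩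
        refine ⟨u⁻¹ * n⁻¹ * u, ?_, u⁻¹, inv_mem hu, by group⟩
        have : u⁻¹ * n⁻¹ * u = u⁻¹ * n⁻¹ * (u⁻¹)⁻¹ := by group
        rw [this]
        exact ‹NC.Normal›.conj_mem n⁻¹ (inv_mem hn) u⁻¹ }
  have hle : Subgroup.closure {w : ↥(Wr Λ H) | ∃ (l : Λ) (h : H l), w = Xi l h} ≤ E := by
    rw [Subgroup.closure_le]
    rintro w ⟨l, h, rfl⟩
    by_cases hl : l ∈ Γ
    · exact ⟨Xi l h, Subgroup.subset_normalClosure ⟨l, hl, h, rfl⟩, 1, one_mem _,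
        (mul_one _).symm⟩
    · exact ⟨1, one_mem _, Xi l h, Subgroup.subset_closure ⟨l, hl, h, rfl⟩,
        (one_mul _).symm⟩
  exact hle (mem_closure_genAll g)

lemma Xi_mem_D {Γ : Set Λ} {l : Λ} (hl : l ∈ Γ) (h : H l) : (Xi l h : ↥(Wr Λ H)) ∈ D H Γ := by
  intro x m hm
  exact xi_apply_ne l h x (fun he => hm (he ▸ hl))

lemma eq_one_of_both {Γ : Set Λ} {g : ↥(Wr Λ H)} (h1 : g ∈ D H Γ) (h2 : g ∈ D H Γᶜ) :
    g = 1 := by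
  refine Subtype.ext (Equiv.ext fun x => Subtype.ext (funext fun l => ?_))
  by_cases hl : l ∈ Γ
  · exact h2 x l (by simpa using hl)
  · exact h1 x l hl

/-! ### Core lemma -/

lemma xi_self (l : Λ) (h : H l) (x : S Λ H) :
    ((xi H l h) x).1 l = if condA l x.1 then h * x.1 l else x.1 l := xiFun_self l h x.1

lemma exists_noncomm {G₀ : Type*} [Group G₀] [IsSimpleGroup G₀]
    (hna : ∃ a b : G₀, a * b ≠ b * a) {a : G₀} (ha : a ≠ 1) :
    ∃ k : G₀, a * k ≠ k * a := by
  by_contra hc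
  push_neg at hc
  have haZ : a ∈ Subgroup.center G₀ := Subgroup.mem_center_iff.2 fun g => (hc g).symm
  rcases IsSimpleGroup.eq_bot_or_eq_top_of_normal (Subgroup.center G₀) inferInstance with h | h
  · rw [h] at haZ
    exact ha (Subgroup.mem_bot.1 haZ)
  · obtain ⟨x, y, hxy⟩ := hna
    have hx : x ∈ Subgroup.center G₀ := h ▸ Subgroup.mem_top x
    exact hxy ((Subgroup.mem_center_iff.1 hx) y).symm

lemma comm_of_comm_eq_one {G₀ : Type*} [Group G₀] {a k : G₀}
    (h : a * k * a⁻¹ * k⁻¹ = 1) : a * k = k * a := by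
  have h2 : a * k * a⁻¹ = k := by
    have := mul_inv_eq_one.1 h
    simpa using this
  rw [mul_inv_eq_iff_eq_mul] at h2
  exact h2

/-- Generic "clear the configuration above l of the witness point" lemma. -/
lemma clear_config {N : Subgroup ↥(Wr Λ H)} (hN : N.Normal) (l : Λ)
    (INV : ↥(Wr Λ H) → Prop)
    (hconj : ∀ (ν : Λ) (s : H ν), l < ν → ∀ g : ↥(Wr Λ H), INV g →
      INV (Xi ν s * g * (Xi ν s)⁻¹)) :
    ∀ (k : ℕ) (n : ↥(Wr Λ H)), n ∈ N → INV n →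
      ∀ x₀ : S Λ H, ({η | l < η ∧ x₀.1 η ≠ 1}).ncard ≤ k →
        ((n : Equiv.Perm (S Λ H)) x₀).1 l ≠ x₀.1 l →
        ∃ m ∈ N, INV m ∧ ∃ x₁ : S Λ H, condA l x₁.1 ∧
          ((m : Equiv.Perm (S Λ H)) x₁).1 l ≠ x₁.1 l := by
  intro k
  induction k with
  | zero =>
    intro n hn hinv x₀ hcard hmove
    have hfin : {η | l < η ∧ x₀.1 η ≠ 1}.Finite := x₀.2.subset fun η hη => hη.2
    have hemp : {η | l < η ∧ x₀.1 η ≠ 1} = ∅ :=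
      (Set.ncard_eq_zero hfin).1 (Nat.le_zero.1 hcard)
    refine ⟨n, hn, hinv, x₀, ?_, hmove⟩
    intro η hη
    by_contra hne
    exact absurd hemp (Set.nonempty_iff_ne_empty.1 ⟨η, hη, hne⟩)
  | succ k ih =>
    intro n hn hinv x₀ hcard hmove
    by_cases hemp : {η | l < η ∧ x₀.1 η ≠ 1} = ∅
    · refine ⟨n, hn, hinv, x₀, ?_, hmove⟩
      intro η hη
      by_contra hne
      exact absurd hemp (Set.nonempty_iff_ne_empty.1 ⟨η, hη, hne⟩)
    · have hfin : {η | l < η ∧ x₀.1 η ≠ 1}.Finite := x₀.2.subset fun η hη => hη.2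
      obtain ⟨ν, hν, hmax'⟩ := Set.Finite.exists_maximalFor id _ hfin
        (Set.nonempty_iff_ne_empty.2 hemp)
      have hmax := fun (a : Λ) (ha : a ∈ _) (h : id ν ≤ id a) => le_antisymm h (hmax' ha h)
      have hlν : l < ν := hν.1
      have hcondν : condA ν x₀.1 := by
        intro η hη
        by_contra hne
        have hmem : η ∈ {η | l < η ∧ x₀.1 η ≠ 1} := ⟨lt_trans hlν hη, hne⟩
        exact absurd (hmax η hmem (le_of_lt hη)) (ne_of_lt hη)
      set s : H ν := (x₀.1 ν)⁻¹ with hs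
      set n' := Xi ν s * n * (Xi ν s)⁻¹ with hn'
      set x₀' := (xi H ν s) x₀ with hx₀'
      have hx₀'ν : x₀'.1 ν = 1 := by
        rw [hx₀', xi_self, if_pos hcondν, hs, inv_mul_cancel]
      have hx₀'ne : ∀ η, η ≠ ν → x₀'.1 η = x₀.1 η := fun η hη => xi_apply_ne ν s x₀ hη
      have hsub : {η | l < η ∧ x₀'.1 η ≠ 1} ⊆ {η | l < η ∧ x₀.1 η ≠ 1} \ {ν} := by
        intro η hη
        rcases eq_or_ne η ν with rfl | hne
        · exact absurd hx₀'ν hη.2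
        · exact ⟨⟨hη.1, by rw [← hx₀'ne η hne]; exact hη.2⟩, hne⟩
      have hcard' : {η | l < η ∧ x₀'.1 η ≠ 1}.ncard ≤ k := by
        have hss : {η | l < η ∧ x₀'.1 η ≠ 1} ⊂ {η | l < η ∧ x₀.1 η ≠ 1} := by
          refine ⟨fun η hη => (hsub hη).1, fun hsup => ?_⟩
          exact (hsub (hsup hν)).2 rfl
        have := Set.ncard_lt_ncard hss hfin
        omega
      have hmove' : ((n' : Equiv.Perm (S Λ H)) x₀').1 l ≠ x₀'.1 l := by
        have e1 : ((n' : Equiv.Perm (S Λ H)) x₀') = (xi H ν s) ((n : Equiv.Perm (S Λ H)) x₀) := by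
          rw [hn', hx₀']
          show ((xi H ν s) * (n : Equiv.Perm (S Λ H)) * (xi H ν s)⁻¹) ((xi H ν s) x₀) = _
          rw [Equiv.Perm.mul_apply, Equiv.Perm.mul_apply, Equiv.Perm.inv_apply_self]
        rw [e1, xi_apply_ne ν s _ (ne_of_lt hlν), hx₀', xi_apply_ne ν s _ (ne_of_lt hlν)]
        exact hmove
      exact ih n' (hN.conj_mem n hn (Xi ν s)) (hconj ν s hlν n hinv) x₀' hcard' hmove'

@[simp] lemma Xi_coe (l : Λ) (h : H l) :
    ((Xi l h : ↥(Wr Λ H)) : Equiv.Perm (S Λ H)) = xi H l h := rfl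

lemma condA_pt1 (l : Λ) : condA l (pt1 : S Λ H).1 := fun _ _ => rfl

lemma ratio_eq {m : Equiv.Perm (S Λ H)} (hm : m ∈ Wr Λ H) (l : Λ) {x y : S Λ H}
    (hx : condA l x.1) (hy : condA l y.1) :
    (m x).1 l * (x.1 l)⁻¹ = (m y).1 l * (y.1 l)⁻¹ :=
  (agree_above hm l (fun η hη => by rw [hx η hη, hy η hη])).2

lemma comm_coe (m : ↥(Wr Λ H)) (l : Λ) (k : H l) :
    ((m * Xi l k * m⁻¹ * (Xi l k)⁻¹ : ↥(Wr Λ H)) : Equiv.Perm (S Λ H)) =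
      (m : Equiv.Perm (S Λ H)) * xi H l k * (m : Equiv.Perm (S Λ H))⁻¹ * xi H l k⁻¹ := by
  push_cast
  rw [Xi_coe, xi_inv]

lemma comm_pure {m : ↥(Wr Λ H)} {l : Λ}
    (hm : ∀ μ ∈ movesSet (m : Equiv.Perm (S Λ H)), ¬ μ < l) (k : H l) :
    ∀ ρ, ρ ≠ l →
      fixesCoord ((m * Xi l k * m⁻¹ * (Xi l k)⁻¹ : ↥(Wr Λ H)) : Equiv.Perm (S Λ H)) ρ := by
  intro ρ hρ x
  rw [comm_coe]
  rw [Equiv.Perm.mul_apply, Equiv.Perm.mul_apply, Equiv.Perm.mul_apply]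
  set y := (xi H l k⁻¹) x with hy
  set z := ((m : Equiv.Perm (S Λ H)))⁻¹ y with hz
  set v := (xi H l k) z with hv
  have hyx : ∀ η, η ≠ l → y.1 η = x.1 η := fun η hη => xi_apply_ne l k⁻¹ x hη
  have hvz : ∀ η, η ≠ l → v.1 η = z.1 η := fun η hη => xi_apply_ne l k z hη
  by_cases hlt : ρ < l
  · have hfix : fixesCoord (m : Equiv.Perm (S Λ H)) ρ := by
      by_contra hmem
      exact hm ρ hmem hlt
    have hfix' : fixesCoord ((m : Equiv.Perm (S Λ H)))⁻¹ ρ := fixesCoord_inv hfix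
    rw [hfix v, hvz ρ hρ, hz, hfix' y, hyx ρ hρ]
  · have hagree : ∀ η, ρ ≤ η → v.1 η = z.1 η := by
      intro η hη
      refine hvz η fun he => ?_
      rcases lt_or_eq_of_le hη with h' | h'
      · rw [he] at h'; exact hlt h'
      · exact hρ (h'.trans he)
    have h1 : ((m : Equiv.Perm (S Λ H)) v).1 ρ = ((m : Equiv.Perm (S Λ H)) z).1 ρ :=
      agree_ge m.2 ρ hagree ρ le_rfl
    rw [h1, hz, Equiv.Perm.apply_inv_self, hyx ρ hρ]

lemma comm_nontriv {m : ↥(Wr Λ H)} {l : Λ} {x₁ : S Λ H} (hx₁ : condA l x₁.1) {k : H l}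
    (hk : (((m : Equiv.Perm (S Λ H)) x₁).1 l * (x₁.1 l)⁻¹) * k ≠
      k * (((m : Equiv.Perm (S Λ H)) x₁).1 l * (x₁.1 l)⁻¹)) :
    (((m * Xi l k * m⁻¹ * (Xi l k)⁻¹ : ↥(Wr Λ H)) : Equiv.Perm (S Λ H)) pt1).1 l ≠ 1 := by
  set a := ((m : Equiv.Perm (S Λ H)) x₁).1 l * (x₁.1 l)⁻¹ with hadef
  have hk1 : k ≠ 1 := by
    intro he
    rw [he, mul_one, one_mul] at hk
    exact hk rfl
  rw [comm_coe]
  rw [Equiv.Perm.mul_apply, Equiv.Perm.mul_apply, Equiv.Perm.mul_apply]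
  set y := (xi H l k⁻¹) pt1 with hy
  set z := ((m : Equiv.Perm (S Λ H)))⁻¹ y with hz
  have hyl : y.1 l = k⁻¹ := by
    rw [hy, xi_self, if_pos (condA_pt1 l), pt1_coord, mul_one]
  have hyne : ∀ η, η ≠ l → y.1 η = 1 := by
    intro η hη
    rw [hy, xi_apply_ne l k⁻¹ pt1 hη, pt1_coord]
  have hycond : condA l y.1 := fun η hη => hyne η (ne_of_gt hη)
  have hmz : (m : Equiv.Perm (S Λ H)) z = y := by rw [hz, Equiv.Perm.apply_inv_self]
  by_cases ht : condA l z.1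
  · have h1 : ((m : Equiv.Perm (S Λ H)) z).1 l * (z.1 l)⁻¹ = a :=
      ratio_eq m.2 l ht hx₁
    rw [hmz, hyl] at h1
    have hzl : z.1 l = a⁻¹ * k⁻¹ := by
      have h2 : (z.1 l)⁻¹ = k * a := by rw [← h1]; group
      calc z.1 l = ((z.1 l)⁻¹)⁻¹ := by rw [inv_inv]
        _ = (k * a)⁻¹ := by rw [h2]
        _ = a⁻¹ * k⁻¹ := by rw [mul_inv_rev]
    set v := (xi H l k) z with hv
    have hvl : v.1 l = k * (a⁻¹ * k⁻¹) := by
      rw [hv, xi_self, if_pos ht, hzl]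
    have hvcond : condA l v.1 := by
      intro η hη
      rw [hv, xi_apply_ne l k z (ne_of_gt hη)]
      exact ht η hη
    have h3 : ((m : Equiv.Perm (S Λ H)) v).1 l * (v.1 l)⁻¹ = a :=
      ratio_eq m.2 l hvcond hx₁
    have h4 : ((m : Equiv.Perm (S Λ H)) v).1 l = a * (k * (a⁻¹ * k⁻¹)) := by
      rw [← hvl]
      calc ((m : Equiv.Perm (S Λ H)) v).1 l
          = (((m : Equiv.Perm (S Λ H)) v).1 l * (v.1 l)⁻¹) * v.1 l := by group
        _ = a * v.1 l := by rw [h3]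
    rw [h4]
    intro he
    have he' : a * k * a⁻¹ * k⁻¹ = 1 := by rw [← he]; group
    exact hk (comm_of_comm_eq_one he')
  · have hvz : (xi H l k) z = z := Subtype.ext (xiFun_of_not l k z.1 ht)
    rw [hvz, hmz, hyl]
    exact inv_ne_one.2 hk1

lemma comm_delta {c : ↥(Wr Λ H)} {l : Λ}
    (hpure : ∀ ρ, ρ ≠ l → fixesCoord (c : Equiv.Perm (S Λ H)) ρ) (k' : H l) :
    c * Xi l k' * c⁻¹ * (Xi l k')⁻¹ =
      (Xi l ((((c : Equiv.Perm (S Λ H)) pt1).1 l) * k' *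
        (((c : Equiv.Perm (S Λ H)) pt1).1 l)⁻¹ * k'⁻¹) : ↥(Wr Λ H)) := by
  set a₀ := ((c : Equiv.Perm (S Λ H)) pt1).1 l with ha₀
  set b := a₀ * k' * a₀⁻¹ * k'⁻¹ with hb
  have hratio : ∀ x : S Λ H, condA l x.1 →
      ((c : Equiv.Perm (S Λ H)) x).1 l * (x.1 l)⁻¹ = a₀ := by
    intro x hx
    have := ratio_eq c.2 l hx (condA_pt1 l)
    rwa [pt1_coord, inv_one, mul_one] at this
  refine Subtype.ext (Equiv.ext fun x => Subtype.ext (funext fun ρ => ?_))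
  have hcoe : ((c * Xi l k' * c⁻¹ * (Xi l k')⁻¹ : ↥(Wr Λ H)) : Equiv.Perm (S Λ H)) x =
      (c : Equiv.Perm (S Λ H)) ((xi H l k')
        (((c : Equiv.Perm (S Λ H)))⁻¹ ((xi H l k'⁻¹) x))) := by
    rw [comm_coe, Equiv.Perm.mul_apply, Equiv.Perm.mul_apply, Equiv.Perm.mul_apply]
  show (((c * Xi l k' * c⁻¹ * (Xi l k')⁻¹ : ↥(Wr Λ H)) : Equiv.Perm (S Λ H)) x).1 ρ =
    (((Xi l b : ↥(Wr Λ H)) : Equiv.Perm (S Λ H)) x).1 ρ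
  rw [hcoe, Xi_coe]
  set y := (xi H l k'⁻¹) x with hy
  set z := ((c : Equiv.Perm (S Λ H)))⁻¹ y with hz
  set v := (xi H l k') z with hv
  have hyx : ∀ η, η ≠ l → y.1 η = x.1 η := fun η hη => xi_apply_ne l k'⁻¹ x hη
  have hzy : ∀ η, η ≠ l → z.1 η = y.1 η := fun η hη => fixesCoord_inv (hpure η hη) y
  have hvz : ∀ η, η ≠ l → v.1 η = z.1 η := fun η hη => xi_apply_ne l k' z hη
  have hcz : (c : Equiv.Perm (S Λ H)) z = y := by rw [hz, Equiv.Perm.apply_inv_self]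
  rcases eq_or_ne ρ l with rfl | hρ
  · rw [xi_self]
    by_cases hcx : condA ρ x.1
    · rw [if_pos hcx]
      have hycond : condA ρ y.1 := fun η hη => by
        rw [hyx η (ne_of_gt hη)]; exact hcx η hη
      have hzcond : condA ρ z.1 := fun η hη => by
        rw [hzy η (ne_of_gt hη)]; exact hycond η hη
      have hvcond : condA ρ v.1 := fun η hη => by
        rw [hvz η (ne_of_gt hη)]; exact hzcond η hη
      have hyl : y.1 ρ = k'⁻¹ * x.1 ρ := by rw [hy, xi_self, if_pos hcx]
      have hzl : z.1 ρ = a₀⁻¹ * (k'⁻¹ * x.1 ρ) := by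
        have h1 := hratio z hzcond
        rw [hcz, hyl] at h1
        have h2 : (z.1 ρ)⁻¹ = (k'⁻¹ * x.1 ρ)⁻¹ * a₀ := by rw [← h1]; group
        calc z.1 ρ = ((z.1 ρ)⁻¹)⁻¹ := (inv_inv _).symm
          _ = ((k'⁻¹ * x.1 ρ)⁻¹ * a₀)⁻¹ := by rw [h2]
          _ = a₀⁻¹ * (k'⁻¹ * x.1 ρ) := by group
      have hvl : v.1 ρ = k' * (a₀⁻¹ * (k'⁻¹ * x.1 ρ)) := by
        rw [hv, xi_self, if_pos hzcond, hzl]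
      have h3 : ((c : Equiv.Perm (S Λ H)) v).1 ρ = a₀ * v.1 ρ := by
        have h4 := hratio v hvcond
        calc ((c : Equiv.Perm (S Λ H)) v).1 ρ
            = (((c : Equiv.Perm (S Λ H)) v).1 ρ * (v.1 ρ)⁻¹) * v.1 ρ := by group
          _ = a₀ * v.1 ρ := by rw [h4]
      rw [h3, hvl, hb]
      group
    · rw [if_neg hcx]
      have hyx' : y = x := Subtype.ext (xiFun_of_not ρ k'⁻¹ x.1 hcx)
      have hxz : ∀ η, η ≠ ρ → x.1 η = z.1 η := by
        intro η hη
        rw [hzy η hη, hyx']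
      have hzcond' : ¬ condA ρ z.1 := by
        intro hc
        exact hcx fun η hη => by rw [hxz η (ne_of_gt hη)]; exact hc η hη
      have hvz' : v = z := Subtype.ext (xiFun_of_not ρ k' z.1 hzcond')
      rw [hvz', hcz, hyx']
  · rw [xi_apply_ne l b x hρ]
    rw [hpure ρ hρ v, hvz ρ hρ, hzy ρ hρ, hyx ρ hρ]

lemma movesSet_conj_xi (ν : Λ) (s : H ν) (g : ↥(Wr Λ H)) :
    movesSet ((Xi ν s * g * (Xi ν s)⁻¹ : ↥(Wr Λ H)) : Equiv.Perm (S Λ H)) ⊆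
      movesSet (g : Equiv.Perm (S Λ H)) ∪ {ν} := by
  have hcoe : ((Xi ν s * g * (Xi ν s)⁻¹ : ↥(Wr Λ H)) : Equiv.Perm (S Λ H)) =
      xi H ν s * (g : Equiv.Perm (S Λ H)) * (xi H ν s)⁻¹ := by
    push_cast
    rw [Xi_coe]
  intro μ hμ
  rw [hcoe] at hμ
  rcases movesSet_mul _ _ hμ with h | h
  · rcases movesSet_mul _ _ h with h' | h'
    · exact Or.inr (movesSet_xi ν s h')
    · exact Or.inl h'
  · exact Or.inr (movesSet_xi ν s⁻¹ (by rwa [xi_inv] at h))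

lemma conj_comm_mem {N : Subgroup ↥(Wr Λ H)} (hN : N.Normal) {m : ↥(Wr Λ H)}
    (hm : m ∈ N) (w : ↥(Wr Λ H)) : m * w * m⁻¹ * w⁻¹ ∈ N := by
  have h1 : m * w * m⁻¹ * w⁻¹ = m * (w * m⁻¹ * w⁻¹) := by group
  rw [h1]
  exact mul_mem hm (hN.conj_mem m⁻¹ (inv_mem hm) w)

lemma core_min [∀ l, IsSimpleGroup (H l)] {N : Subgroup ↥(Wr Λ H)} (hN : N.Normal)
    (hna : ∀ l : Λ, ∃ a b : H l, a * b ≠ b * a) (l : Λ) (n : ↥(Wr Λ H)) (hn : n ∈ N)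
    (hmin : ∀ μ ∈ movesSet (n : Equiv.Perm (S Λ H)), ¬ μ < l)
    (hl : l ∈ movesSet (n : Equiv.Perm (S Λ H))) :
    ∀ h : H l, Xi l h ∈ N := by
  have hconj : ∀ (ν : Λ) (s : H ν), l < ν → ∀ g : ↥(Wr Λ H),
      (∀ μ ∈ movesSet (g : Equiv.Perm (S Λ H)), ¬ μ < l) →
      (∀ μ ∈ movesSet ((Xi ν s * g * (Xi ν s)⁻¹ : ↥(Wr Λ H)) : Equiv.Perm (S Λ H)), ¬ μ < l) := by
    intro ν s hν g hg μ hμ hlt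
    rcases movesSet_conj_xi ν s g hμ with h | h
    · exact hg μ h hlt
    · rw [Set.mem_singleton_iff] at h
      rw [h] at hlt
      exact lt_asymm hν hlt
  obtain ⟨x₀, hx₀⟩ := not_forall.1 hl
  obtain ⟨m, hmN, hmINV, x₁, hx₁cond, hx₁mv⟩ :=
    clear_config hN l (fun g => ∀ μ ∈ movesSet (g : Equiv.Perm (S Λ H)), ¬ μ < l) hconj
      ({η | l < η ∧ x₀.1 η ≠ 1}).ncard n hn hmin x₀ le_rfl hx₀
  set a := ((m : Equiv.Perm (S Λ H)) x₁).1 l * (x₁.1 l)⁻¹ with hadef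
  have ha : a ≠ 1 := fun he => hx₁mv (mul_inv_eq_one.1 he)
  obtain ⟨k, hk⟩ := exists_noncomm (hna l) ha
  set c := m * Xi l k * m⁻¹ * (Xi l k)⁻¹ with hc
  have hcN : c ∈ N := conj_comm_mem hN hmN (Xi l k)
  have hcpure : ∀ ρ, ρ ≠ l → fixesCoord (c : Equiv.Perm (S Λ H)) ρ := comm_pure hmINV k
  have hcmv : ((c : Equiv.Perm (S Λ H)) pt1).1 l ≠ 1 := comm_nontriv hx₁cond hk
  obtain ⟨k', hk'⟩ := exists_noncomm (hna l) hcmv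
  set b := ((c : Equiv.Perm (S Λ H)) pt1).1 l * k' *
    (((c : Equiv.Perm (S Λ H)) pt1).1 l)⁻¹ * k'⁻¹ with hbdef
  have hbN : (Xi l b : ↥(Wr Λ H)) ∈ N := by
    rw [← comm_delta hcpure k']
    exact conj_comm_mem hN hcN (Xi l k')
  have hb : b ≠ 1 := fun he => hk' (comm_of_comm_eq_one he)
  set K : Subgroup (H l) :=
    { carrier := {h | (Xi l h : ↥(Wr Λ H)) ∈ N}
      one_mem' := by
        show (Xi l (1 : H l) : ↥(Wr Λ H)) ∈ N
        rw [Xi_one]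
        exact one_mem N
      mul_mem' := by
        intro p q hp hq
        show (Xi l (p * q) : ↥(Wr Λ H)) ∈ N
        rw [← Xi_mul]
        exact mul_mem hp hq
      inv_mem' := by
        intro p hp
        show (Xi l p⁻¹ : ↥(Wr Λ H)) ∈ N
        rw [← Xi_inv]
        exact inv_mem hp } with hK
  have hKnormal : K.Normal := by
    constructor
    intro p hp g
    show (Xi l (g * p * g⁻¹) : ↥(Wr Λ H)) ∈ N
    have he : (Xi l (g * p * g⁻¹) : ↥(Wr Λ H)) = Xi l g * Xi l p * (Xi l g)⁻¹ := by
      rw [Xi_inv, Xi_mul, Xi_mul]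
    rw [he]
    exact hN.conj_mem _ hp _
  rcases IsSimpleGroup.eq_bot_or_eq_top_of_normal K hKnormal with hbot | htop
  · exfalso
    have : b ∈ K := hbN
    rw [hbot] at this
    exact hb (Subgroup.mem_bot.1 this)
  · intro h
    have : h ∈ K := by rw [htop]; exact Subgroup.mem_top h
    exact this

lemma mul_apply_coe (a b : ↥(Wr Λ H)) (x : S Λ H) :
    ((a * b : ↥(Wr Λ H)) : Equiv.Perm (S Λ H)) x =
      (a : Equiv.Perm (S Λ H)) ((b : Equiv.Perm (S Λ H)) x) := rfl

lemma inv_coe (a : ↥(Wr Λ H)) :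
    ((a⁻¹ : ↥(Wr Λ H)) : Equiv.Perm (S Λ H)) = ((a : Equiv.Perm (S Λ H)))⁻¹ := rfl

/-- Realizing a configuration above `l` by an element of the wreath product. -/
lemma realize (l : Λ) :
    ∀ (k : ℕ) (t : S Λ H), (∀ ρ, ¬ l < ρ → t.1 ρ = 1) →
      ({η | l < η ∧ t.1 η ≠ 1}).ncard ≤ k →
      ∃ u : ↥(Wr Λ H),
        (∀ (x : S Λ H) (ρ : Λ), ¬ l < ρ → ((u : Equiv.Perm (S Λ H)) x).1 ρ = x.1 ρ) ∧
        (∀ x : S Λ H, condA l x.1 → ∀ η, l < η → ((u : Equiv.Perm (S Λ H)) x).1 η = t.1 η) := by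
  intro k
  induction k with
  | zero =>
    intro t ht hcard
    have hfin : {η | l < η ∧ t.1 η ≠ 1}.Finite := t.2.subset fun η hη => hη.2
    have hemp : {η | l < η ∧ t.1 η ≠ 1} = ∅ :=
      (Set.ncard_eq_zero hfin).1 (Nat.le_zero.1 hcard)
    refine ⟨1, fun x ρ _ => rfl, fun x hx η hη => ?_⟩
    have ht1 : t.1 η = 1 := by
      by_contra hne
      exact absurd hemp (Set.nonempty_iff_ne_empty.1 ⟨η, hη, hne⟩)
    show x.1 η = t.1 η
    rw [ht1, hx η hη]
  | succ k ih =>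
    intro t ht hcard
    by_cases hemp : {η | l < η ∧ t.1 η ≠ 1} = ∅
    · refine ⟨1, fun x ρ _ => rfl, fun x hx η hη => ?_⟩
      have ht1 : t.1 η = 1 := by
        by_contra hne
        exact absurd hemp (Set.nonempty_iff_ne_empty.1 ⟨η, hη, hne⟩)
      show x.1 η = t.1 η
      rw [ht1, hx η hη]
    · have hfin : {η | l < η ∧ t.1 η ≠ 1}.Finite := t.2.subset fun η hη => hη.2
      obtain ⟨ν, hν, hmax'⟩ := Set.Finite.exists_maximalFor id _ hfin
        (Set.nonempty_iff_ne_empty.2 hemp)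
      have hmax := fun (a : Λ) (ha : a ∈ _) (h : id ν ≤ id a) => le_antisymm h (hmax' ha h)
      have hlν : l < ν := hν.1
      set t' : S Λ H := ⟨Function.update t.1 ν 1, by
        refine t.2.subset fun η hη => ?_
        simp only [supp, Set.mem_setOf_eq] at hη ⊢
        rcases eq_or_ne η ν with rfl | hne
        · exact absurd (Function.update_self η 1 t.1) hη
        · rwa [Function.update_of_ne hne] at hη⟩ with ht'
      have ht'c : ∀ η, η ≠ ν → t'.1 η = t.1 η := fun η hη => Function.update_of_ne hη 1 t.1
      have ht'ν : t'.1 ν = 1 := Function.update_self ν 1 t.1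
      have ht'off : ∀ ρ, ¬ l < ρ → t'.1 ρ = 1 := by
        intro ρ hρ
        have hρν : ρ ≠ ν := fun he => hρ (he ▸ hlν)
        rw [ht'c ρ hρν]
        exact ht ρ hρ
      have hcard' : {η | l < η ∧ t'.1 η ≠ 1}.ncard ≤ k := by
        have hss : {η | l < η ∧ t'.1 η ≠ 1} ⊂ {η | l < η ∧ t.1 η ≠ 1} := by
          constructor
          · intro η hη
            rcases eq_or_ne η ν with rfl | hne
            · exact absurd ht'ν hη.2
            · exact ⟨hη.1, by rw [← ht'c η hne]; exact hη.2⟩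
          · intro hsup
            have := hsup hν
            exact this.2 ht'ν
        have := Set.ncard_lt_ncard hss hfin
        omega
      obtain ⟨u', hu'1, hu'2⟩ := ih t' ht'off hcard'
      refine ⟨Xi ν (t.1 ν) * u', ?_, ?_⟩
      · intro x ρ hρ
        have hρν : ρ ≠ ν := fun he => hρ (he ▸ hlν)
        rw [mul_apply_coe, Xi_coe, xi_apply_ne ν _ _ hρν]
        exact hu'1 x ρ hρ
      · intro x hx η hη
        rw [mul_apply_coe, Xi_coe]
        set w := (u' : Equiv.Perm (S Λ H)) x with hw
        have hwt' : ∀ η, l < η → w.1 η = t'.1 η := hu'2 x hx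
        rcases eq_or_ne η ν with rfl | hne
        · have hcw : condA η w.1 := by
            intro ζ hζ
            rw [hwt' ζ (lt_trans hη hζ), ht'c ζ (ne_of_gt hζ)]
            by_contra hne1
            have hmem : ζ ∈ {η' | l < η' ∧ t.1 η' ≠ 1} := ⟨lt_trans hη hζ, hne1⟩
            exact absurd (hmax ζ hmem (le_of_lt hζ)) (ne_of_lt hζ)
          rw [xi_self, if_pos hcw, hwt' η hη, ht'ν, mul_one]
        · rw [xi_apply_ne ν _ w hne, hwt' η hη, ht'c η hne]

/-- delta elements: conjugates of ξ by realizations. -/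
lemma delta_lemma (l : Λ) (t : S Λ H) (u : ↥(Wr Λ H))
    (hu1 : ∀ (x : S Λ H) (ρ : Λ), ¬ l < ρ → ((u : Equiv.Perm (S Λ H)) x).1 ρ = x.1 ρ)
    (hu2 : ∀ x : S Λ H, condA l x.1 → ∀ η, l < η →
      ((u : Equiv.Perm (S Λ H)) x).1 η = t.1 η)
    (h : H l) :
    (∀ (x : S Λ H) (ρ : Λ), ρ ≠ l →
        (((u * Xi l h * u⁻¹ : ↥(Wr Λ H)) : Equiv.Perm (S Λ H)) x).1 ρ = x.1 ρ) ∧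
    (∀ x : S Λ H, (((u * Xi l h * u⁻¹ : ↥(Wr Λ H)) : Equiv.Perm (S Λ H)) x).1 l =
      if ∀ η, l < η → x.1 η = t.1 η then h * x.1 l else x.1 l) := by
  have hu1inv : ∀ (x : S Λ H) (ρ : Λ), ¬ l < ρ →
      (((u : Equiv.Perm (S Λ H)))⁻¹ x).1 ρ = x.1 ρ := by
    intro x ρ hρ
    have := hu1 (((u : Equiv.Perm (S Λ H)))⁻¹ x) ρ hρ
    rw [Equiv.Perm.apply_inv_self] at this
    exact this.symm
  have hcoe : ∀ x : S Λ H, ((u * Xi l h * u⁻¹ : ↥(Wr Λ H)) : Equiv.Perm (S Λ H)) x =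
      (u : Equiv.Perm (S Λ H)) ((xi H l h)
        (((u : Equiv.Perm (S Λ H)))⁻¹ x)) := fun x => rfl
  constructor
  · intro x ρ hρ
    rw [hcoe]
    set y := ((u : Equiv.Perm (S Λ H)))⁻¹ x with hy
    by_cases hlρ : l < ρ
    · have hagree : ∀ η, l < η → ((xi H l h) y).1 η = y.1 η :=
        fun η hη => xi_apply_ne l h y (ne_of_gt hη)
      have := (agree_above u.2 l hagree).1 ρ hlρ
      rw [this, hy, Equiv.Perm.apply_inv_self]
    · rw [hu1 _ ρ hlρ, xi_apply_ne l h y hρ, hy, hu1inv x ρ hlρ]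
  · intro x
    rw [hcoe]
    set y := ((u : Equiv.Perm (S Λ H)))⁻¹ x with hy
    have hyl : y.1 l = x.1 l := hu1inv x l (lt_irrefl l)
    have hkey : condA l y.1 ↔ ∀ η, l < η → x.1 η = t.1 η := by
      constructor
      · intro hc η hη
        have h1 : ((u : Equiv.Perm (S Λ H)) y).1 η = t.1 η := hu2 y hc η hη
        rw [hy, Equiv.Perm.apply_inv_self] at h1
        exact h1
      · intro hc η hη
        set q := (u : Equiv.Perm (S Λ H)) pt1 with hq
        have hqt : ∀ ζ, l < ζ → q.1 ζ = t.1 ζ := hu2 pt1 (condA_pt1 l)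
        have hagree : ∀ ζ, l < ζ → x.1 ζ = q.1 ζ := by
          intro ζ hζ
          rw [hc ζ hζ, hqt ζ hζ]
        have h2 := (agree_above (inv_mem u.2) l hagree).1 η hη
        have h3 : ((u : Equiv.Perm (S Λ H)))⁻¹ q = pt1 := by
          rw [hq, Equiv.Perm.inv_apply_self]
        rw [h3] at h2
        rw [← hy] at h2
        rw [h2]
        rfl
    rw [hu1 _ l (lt_irrefl l), xi_self]
    by_cases hc : condA l y.1
    · rw [if_pos hc, if_pos (hkey.1 hc), hyl]
    · rw [if_neg hc, if_neg (fun hrc => hc (hkey.2 hrc)), hyl]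

/-! ### finite support of the level-l cocycle -/

def isRep (l : Λ) (x : S Λ H) : Prop := ∀ ρ, ¬ l < ρ → x.1 ρ = 1

def toRep (l : Λ) (x : S Λ H) : S Λ H :=
  ⟨fun η => if l < η then x.1 η else 1, by
    refine x.2.subset fun η hη => ?_
    simp only [supp, Set.mem_setOf_eq] at hη ⊢
    by_cases hc : l < η
    · rwa [if_pos hc] at hη
    · rw [if_neg hc] at hη
      exact absurd rfl hη⟩

lemma toRep_isRep (l : Λ) (x : S Λ H) : isRep l (toRep l x) := by
  intro ρ hρ
  show (if l < ρ then x.1 ρ else 1) = 1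
  rw [if_neg hρ]

lemma toRep_above (l : Λ) (x : S Λ H) : ∀ η, l < η → (toRep l x).1 η = x.1 η := by
  intro η hη
  show (if l < η then x.1 η else 1) = x.1 η
  rw [if_pos hη]

lemma rep_ext {l : Λ} {x x' : S Λ H} (hx : isRep l x) (hx' : isRep l x')
    (h : ∀ η, l < η → x.1 η = x'.1 η) : x = x' := by
  refine Subtype.ext (funext fun η => ?_)
  by_cases hη : l < η
  · exact h η hη
  · rw [hx η hη, hx' η hη]

lemma isRep_pt1 (l : Λ) : isRep l (pt1 : S Λ H) := fun _ _ => rfl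

def suppD (l : Λ) (g : Equiv.Perm (S Λ H)) : Set (S Λ H) :=
  {x | isRep l x ∧ (g x).1 l ≠ x.1 l}

lemma suppD_finite (l : Λ) {g : Equiv.Perm (S Λ H)} (hg : g ∈ Wr Λ H) :
    (suppD l g).Finite := by
  refine wr_ind (fun g => (suppD l g).Finite) ?_ ?_ ?_ g hg
  · refine Set.Finite.subset Set.finite_empty fun x hx => ?_
    exact absurd rfl hx.2
  · intro ν h
    rcases eq_or_ne ν l with rfl | hne
    · refine Set.Finite.subset (Set.finite_singleton pt1) fun x hx => ?_
      obtain ⟨hrep, hmv⟩ := hx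
      have hcond : condA ν x.1 := by
        by_contra hc
        rw [xi_self, if_neg hc] at hmv
        exact hmv rfl
      have : x = pt1 := by
        refine Subtype.ext (funext fun η => ?_)
        by_cases hη : ν < η
        · exact hcond η hη
        · exact hrep η hη
      exact this
    · refine Set.Finite.subset Set.finite_empty fun x hx => ?_
      exact absurd (xi_apply_ne ν h x hne.symm) hx.2
  · intro a b ha hb Pa Pb
    have hsub : suppD l (a * b) ⊆ suppD l b ∪
        {x | isRep l x ∧ toRep l (b x) ∈ suppD l a} := by
      intro x hx
      by_cases hxb : x ∈ suppD l b
      · exact Or.inl hxb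
      · have hbfix : (b x).1 l = x.1 l := by
          by_contra hc
          exact hxb ⟨hx.1, hc⟩
        refine Or.inr ⟨hx.1, toRep_isRep l (b x), ?_⟩
        have hmv : (a (b x)).1 l ≠ (b x).1 l := by
          rw [hbfix]
          exact hx.2
        have hagree : ∀ η, l < η → (b x).1 η = (toRep l (b x)).1 η :=
          fun η hη => (toRep_above l (b x) η hη).symm
        have hr := (agree_above ha l hagree).2
        have hrl : (toRep l (b x)).1 l = 1 := toRep_isRep l (b x) l (lt_irrefl l)
        intro hfix
        rw [hrl] at hfix
        rw [hfix, hrl, inv_one, mul_one] at hr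
        apply hmv
        have : (a (b x)).1 l * ((b x).1 l)⁻¹ = 1 := by rw [hr]
        exact mul_inv_eq_one.1 this
    refine Set.Finite.subset (Set.Finite.union Pb ?_) hsub
    set θ : S Λ H → S Λ H := fun x => toRep l (b x) with hθ
    refine Set.Finite.of_finite_image (f := θ) ?_ ?_
    · refine Set.Finite.subset Pa fun y hy => ?_
      obtain ⟨x, hx, rfl⟩ := hy
      exact hx.2
    · intro x hx x' hx' he
      have hbagree : ∀ η, l < η → (b x).1 η = (b x').1 η := by
        intro η hη
        have he' : toRep l (b x) = toRep l (b x') := he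
        have h1 := toRep_above l (b x) η hη
        have h2 := toRep_above l (b x') η hη
        rw [← h1, ← h2, he']
      have hxagree : ∀ η, l < η → x.1 η = x'.1 η := by
        intro η hη
        have := (agree_above (inv_mem hb) l hbagree).1 η hη
        rwa [Equiv.Perm.inv_apply_self, Equiv.Perm.inv_apply_self] at this
      exact rep_ext hx.1 hx'.1 hxagree

/-- Correction lemma : kill the action at level l of an element of N. -/
lemma correction {N : Subgroup ↥(Wr Λ H)} (hN : N.Normal) (l : Λ)
    (hXiN : ∀ h : H l, (Xi l h : ↥(Wr Λ H)) ∈ N) :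
    ∀ (k : ℕ) (n : ↥(Wr Λ H)), n ∈ N → (suppD l (n : Equiv.Perm (S Λ H))).ncard ≤ k →
      ∃ n' ∈ N,
        (∀ (x : S Λ H) (ρ : Λ), ρ ≠ l →
          ((n' : Equiv.Perm (S Λ H)) x).1 ρ = ((n : Equiv.Perm (S Λ H)) x).1 ρ) ∧
        (∀ x : S Λ H, ((n' : Equiv.Perm (S Λ H)) x).1 l = x.1 l) := by
  have hfixall : ∀ n : ↥(Wr Λ H), suppD l (n : Equiv.Perm (S Λ H)) = ∅ →
      ∀ x : S Λ H, ((n : Equiv.Perm (S Λ H)) x).1 l = x.1 l := by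
    intro n hemp x
    set r := toRep l x with hr
    have hagree : ∀ η, l < η → x.1 η = r.1 η :=
      fun η hη => (toRep_above l x η hη).symm
    have hratio := (agree_above n.2 l hagree).2
    have hrfix : ((n : Equiv.Perm (S Λ H)) r).1 l = r.1 l := by
      by_contra hc
      exact absurd hemp (Set.nonempty_iff_ne_empty.1 ⟨r, toRep_isRep l x, hc⟩)
    rw [hrfix] at hratio
    have h1 : ((n : Equiv.Perm (S Λ H)) x).1 l * (x.1 l)⁻¹ = 1 := by
      rw [hratio]; group
    exact mul_inv_eq_one.1 h1
  intro k
  induction k with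
  | zero =>
    intro n hn hcard
    have hfin := suppD_finite l n.2
    have hemp := (Set.ncard_eq_zero hfin).1 (Nat.le_zero.1 hcard)
    exact ⟨n, hn, fun x ρ _ => rfl, hfixall n hemp⟩
  | succ k ih =>
    intro n hn hcard
    have hfin := suppD_finite l n.2
    by_cases hemp : suppD l (n : Equiv.Perm (S Λ H)) = ∅
    · exact ⟨n, hn, fun x ρ _ => rfl, hfixall n hemp⟩
    · obtain ⟨r, hrmem⟩ := Set.nonempty_iff_ne_empty.2 hemp
      obtain ⟨hrrep, hrmv⟩ := hrmem
      set t := toRep l ((n : Equiv.Perm (S Λ H)) r) with ht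
      have htoff : ∀ ρ, ¬ l < ρ → t.1 ρ = 1 := toRep_isRep l _
      obtain ⟨u, hu1, hu2⟩ := realize l ({η | l < η ∧ t.1 η ≠ 1}).ncard t htoff le_rfl
      set v : H l := (((n : Equiv.Perm (S Λ H)) r).1 l)⁻¹ with hv
      obtain ⟨hd1, hd2⟩ := delta_lemma l t u hu1 hu2 v
      set d := u * Xi l v * u⁻¹ with hd
      have hdN : d ∈ N := hN.conj_mem _ (hXiN v) u
      set n₁ := d * n with hn₁
      have hn₁N : n₁ ∈ N := mul_mem hdN hn
      have hagree₁ : ∀ (x : S Λ H) (ρ : Λ), ρ ≠ l →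
          ((n₁ : Equiv.Perm (S Λ H)) x).1 ρ = ((n : Equiv.Perm (S Λ H)) x).1 ρ := by
        intro x ρ hρ
        rw [hn₁, mul_apply_coe]
        exact hd1 _ ρ hρ
      have hl₁ : ∀ x : S Λ H, ((n₁ : Equiv.Perm (S Λ H)) x).1 l =
          if ∀ η, l < η → ((n : Equiv.Perm (S Λ H)) x).1 η = t.1 η
          then v * ((n : Equiv.Perm (S Λ H)) x).1 l
          else ((n : Equiv.Perm (S Λ H)) x).1 l := by
        intro x
        rw [hn₁, mul_apply_coe]
        exact hd2 _
      have hsub : suppD l (n₁ : Equiv.Perm (S Λ H)) ⊆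
          suppD l (n : Equiv.Perm (S Λ H)) \ {r} := by
        intro x hx
        obtain ⟨hxrep, hxmv⟩ := hx
        by_cases hcfg : ∀ η, l < η → ((n : Equiv.Perm (S Λ H)) x).1 η = t.1 η
        · exfalso
          have hxr : x = r := by
            have hnagree : ∀ η, l < η → ((n : Equiv.Perm (S Λ H)) x).1 η =
                ((n : Equiv.Perm (S Λ H)) r).1 η := by
              intro η hη
              rw [hcfg η hη, ht, toRep_above l _ η hη]
            have := (agree_above (inv_mem n.2) l hnagree).1
            have hxx : ∀ η, l < η → x.1 η = r.1 η := by
              intro η hη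
              have h2 := this η hη
              rwa [Equiv.Perm.inv_apply_self, Equiv.Perm.inv_apply_self] at h2
            exact rep_ext hxrep hrrep hxx
          apply hxmv
          rw [hxr, hl₁ r, if_pos (fun η hη => by rw [ht, toRep_above l _ η hη]), hv,
            inv_mul_cancel, hrrep l (lt_irrefl l)]
        · refine ⟨⟨hxrep, ?_⟩, ?_⟩
          · rw [hl₁ x, if_neg hcfg] at hxmv
            exact hxmv
          · intro hxr
            rw [Set.mem_singleton_iff] at hxr
            apply hcfg
            intro η hη
            rw [hxr, ht, toRep_above l _ η hη]
      have hcard' : (suppD l (n₁ : Equiv.Perm (S Λ H))).ncard ≤ k := by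
        have hss : suppD l (n₁ : Equiv.Perm (S Λ H)) ⊂ suppD l (n : Equiv.Perm (S Λ H)) := by
          constructor
          · exact fun x hx => (hsub hx).1
          · intro hsup
            exact (hsub (hsup ⟨hrrep, hrmv⟩)).2 rfl
        have := Set.ncard_lt_ncard hss hfin
        omega
      obtain ⟨n', hn'N, hn'agree, hn'fix⟩ := ih n₁ hn₁N hcard'
      refine ⟨n', hn'N, ?_, hn'fix⟩
      intro x ρ hρ
      rw [hn'agree x ρ hρ, hagree₁ x ρ hρ]

/-- Main lemma: if `n ∈ N` moves coordinate `l`, then all `ξ` at level `l` lie in `N`. -/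
lemma main_moves [∀ l, IsSimpleGroup (H l)] {N : Subgroup ↥(Wr Λ H)} (hN : N.Normal)
    (hna : ∀ l : Λ, ∃ a b : H l, a * b ≠ b * a) :
    ∀ (k : ℕ) (n : ↥(Wr Λ H)), n ∈ N → (movesSet (n : Equiv.Perm (S Λ H))).ncard ≤ k →
      ∀ l ∈ movesSet (n : Equiv.Perm (S Λ H)), ∀ h : H l, (Xi l h : ↥(Wr Λ H)) ∈ N := by
  intro k
  induction k with
  | zero =>
    intro n hn hcard l hl h
    have hfin := movesSet_finite n.2
    have hemp := (Set.ncard_eq_zero hfin).1 (Nat.le_zero.1 hcard)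
    rw [hemp] at hl
    exact absurd hl (Set.notMem_empty l)
  | succ k ih =>
    intro n hn hcard l hl h
    set A := {μ | μ ∈ movesSet (n : Equiv.Perm (S Λ H)) ∧ μ ≤ l} with hA
    have hAfin : A.Finite := (movesSet_finite n.2).subset fun μ hμ => hμ.1
    obtain ⟨l₀, hl₀A, hl₀min'⟩ := Set.Finite.exists_minimalFor id _ hAfin ⟨l, hl, le_rfl⟩
    have hl₀min := fun (a : Λ) (ha : a ∈ A) (h : id a ≤ id l₀) => le_antisymm (hl₀min' ha h) h
    have hmin : ∀ μ ∈ movesSet (n : Equiv.Perm (S Λ H)), ¬ μ < l₀ := by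
      intro μ hμ hlt
      have hμA : μ ∈ A := ⟨hμ, le_trans (le_of_lt hlt) hl₀A.2⟩
      exact absurd (hl₀min μ hμA (le_of_lt hlt)).symm (ne_of_lt hlt)
    have hXi0 : ∀ h' : H l₀, (Xi l₀ h' : ↥(Wr Λ H)) ∈ N :=
      core_min hN hna l₀ n hn hmin hl₀A.1
    rcases eq_or_ne l₀ l with rfl | hne
    · exact hXi0 h
    · obtain ⟨n', hn'N, hagree, hfix⟩ :=
        correction hN l₀ hXi0 (suppD l₀ (n : Equiv.Perm (S Λ H))).ncard n hn le_rfl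
      have hsub : movesSet (n' : Equiv.Perm (S Λ H)) ⊆
          movesSet (n : Equiv.Perm (S Λ H)) \ {l₀} := by
        intro ρ hρ
        rcases eq_or_ne ρ l₀ with rfl | hρne
        · exact absurd (fun x => hfix x) hρ
        · refine ⟨?_, hρne⟩
          by_contra hmem
          have hfn : fixesCoord (n : Equiv.Perm (S Λ H)) ρ := fixes_of_not_mem hmem
          exact hρ fun x => by rw [hagree x ρ hρne, hfn x]
      have hlmem : l ∈ movesSet (n' : Equiv.Perm (S Λ H)) := by
        intro hfixl
        apply hl
        intro x
        rw [← hagree x l (Ne.symm hne)]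
        exact hfixl x
      have hcard' : (movesSet (n' : Equiv.Perm (S Λ H))).ncard ≤ k := by
        have hss : movesSet (n' : Equiv.Perm (S Λ H)) ⊂
            movesSet (n : Equiv.Perm (S Λ H)) := by
          constructor
          · exact fun ρ hρ => (hsub hρ).1
          · intro hsup
            exact (hsub (hsup hl₀A.1)).2 rfl
        have := Set.ncard_lt_ncard hss (movesSet_finite n.2)
        omega
      exact ih n' hn'N hcard' l hlmem h

/-- The downward propagation commutator computation. -/
lemma down_moves {l g0 : Λ} (hlt : l < g0) {h : H g0} (hh : h ≠ 1) {k : H l} (hk : k ≠ 1) :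
    (((Xi l k * Xi g0 h * (Xi l k)⁻¹ * (Xi g0 h)⁻¹ : ↥(Wr Λ H)) :
      Equiv.Perm (S Λ H)) pt1).1 l ≠ pt1.1 l := by
  have hcoe : ((Xi l k * Xi g0 h * (Xi l k)⁻¹ * (Xi g0 h)⁻¹ : ↥(Wr Λ H)) :
      Equiv.Perm (S Λ H)) = xi H l k * xi H g0 h * xi H l k⁻¹ * xi H g0 h⁻¹ := by
    push_cast
    simp only [Xi_coe]
    rw [xi_inv, xi_inv]
  rw [hcoe, Equiv.Perm.mul_apply, Equiv.Perm.mul_apply, Equiv.Perm.mul_apply]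
  set p1 := (xi H g0 h⁻¹) pt1 with hp1
  have hp1g : p1.1 g0 = h⁻¹ := by
    rw [hp1, xi_self, if_pos (condA_pt1 g0), pt1_coord, mul_one]
  have hp1ne : ∀ η, η ≠ g0 → p1.1 η = 1 := by
    intro η hη
    rw [hp1, xi_apply_ne g0 h⁻¹ pt1 hη, pt1_coord]
  have hnc : ¬ condA l p1.1 := by
    intro hc
    have := hc g0 hlt
    rw [hp1g] at this
    exact hh (inv_eq_one.1 this)
  have hp2 : (xi H l k⁻¹) p1 = p1 := Subtype.ext (xiFun_of_not l k⁻¹ p1.1 hnc)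
  have hcg : condA g0 p1.1 := fun η hη => hp1ne η (ne_of_gt hη)
  have hp3 : (xi H g0 h) p1 = pt1 := by
    refine Subtype.ext (funext fun η => ?_)
    rcases eq_or_ne η g0 with rfl | hη
    · show ((xi H η h) p1).1 η = 1
      rw [xi_self, if_pos hcg, hp1g, mul_inv_cancel]
    · show ((xi H g0 h) p1).1 η = 1
      rw [xi_apply_ne g0 h p1 hη]
      exact hp1ne η hη
  rw [hp2, hp3, xi_self, if_pos (condA_pt1 l), pt1_coord, mul_one]
  exact hk
end GW

end

/-- Silcock: if every `H_λ` is a nonabelian simple group, then every normal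
subgroup of `H_Λ = Wr_{λ∈Λ} H_λ` equals `D_Γ` for some downward closed `Γ ⊆ Λ`. -/
theorem normal_subgroup_eq_d {Λ : Type*} [PartialOrder Λ] (H : Λ → Type*)
    [∀ l, Group (H l)] [∀ l, IsSimpleGroup (H l)]
    (hna : ∀ l : Λ, ∃ a b : H l, a * b ≠ b * a)
    (N : Subgroup ↥(GW.Wr Λ H)) (hN : N.Normal) :
    ∃ Γ : Set Λ, (∀ ⦃g l : Λ⦄, g ∈ Γ → l ≤ g → l ∈ Γ) ∧ N = GW.D H Γ := by
  classical
  set Γ : Set Λ := {l | ∃ n : ↥(GW.Wr Λ H), n ∈ N ∧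
    l ∈ GW.movesSet (n : Equiv.Perm (GW.S Λ H))} with hΓdef
  have hXiΓ : ∀ l ∈ Γ, ∀ h : H l, (GW.Xi l h : ↥(GW.Wr Λ H)) ∈ N := by
    rintro l ⟨n, hn, hl⟩ h
    exact GW.main_moves hN hna
      (GW.movesSet (n : Equiv.Perm (GW.S Λ H))).ncard n hn le_rfl l hl h
  have hdc : ∀ ⦃g l : Λ⦄, g ∈ Γ → l ≤ g → l ∈ Γ := by
    intro g0 l hg hle
    rcases eq_or_lt_of_le hle with rfl | hlt
    · exact hg
    · obtain ⟨a, b, hab⟩ := hna g0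
      have ha : a ≠ 1 := fun he => hab (by rw [he, one_mul, mul_one])
      obtain ⟨a', b', hab'⟩ := hna l
      have ha' : a' ≠ 1 := fun he => hab' (by rw [he, one_mul, mul_one])
      set c := GW.Xi l a' * GW.Xi g0 a * (GW.Xi l a')⁻¹ * (GW.Xi g0 a)⁻¹ with hc
      have hcN : c ∈ N := by
        have h1 : (GW.Xi g0 a : ↥(GW.Wr Λ H)) ∈ N := hXiΓ g0 hg a
        exact mul_mem (hN.conj_mem _ h1 (GW.Xi l a')) (inv_mem h1)
      exact ⟨c, hcN, fun hfix => GW.down_moves hlt ha ha' (hfix GW.pt1)⟩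
  refine ⟨Γ, hdc, ?_⟩
  apply le_antisymm
  · intro n hn x l hl
    have hnm : l ∉ GW.movesSet (n : Equiv.Perm (GW.S Λ H)) := fun hmem => hl ⟨n, hn, hmem⟩
    exact GW.fixes_of_not_mem hnm x
  · intro g hg
    obtain ⟨n, hnNC, u, huCC, rfl⟩ := GW.decomp Γ g
    haveI hDn : (GW.D H Γ).Normal := GW.D_normal hdc
    haveI hNn : N.Normal := hN
    have hNCN : Subgroup.normalClosure
        {w : ↥(GW.Wr Λ H) | ∃ l ∈ Γ, ∃ h : H l, w = GW.Xi l h} ≤ N := by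
      apply Subgroup.normalClosure_le_normal
      rintro w ⟨l, hl, h, rfl⟩
      exact hXiΓ l hl h
    have hNCD : Subgroup.normalClosure
        {w : ↥(GW.Wr Λ H) | ∃ l ∈ Γ, ∃ h : H l, w = GW.Xi l h} ≤ GW.D H Γ := by
      apply Subgroup.normalClosure_le_normal
      rintro w ⟨l, hl, h, rfl⟩
      exact GW.Xi_mem_D hl h
    have hCCD : Subgroup.closure
        {w : ↥(GW.Wr Λ H) | ∃ l ∈ (Γᶜ : Set Λ), ∃ h : H l, w = GW.Xi l h} ≤ GW.D H Γᶜ := by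
      rw [Subgroup.closure_le]
      rintro w ⟨l, hl, h, rfl⟩
      exact GW.Xi_mem_D hl h
    have huD : u ∈ GW.D H Γ := by
      have h2 : n ∈ GW.D H Γ := hNCD hnNC
      have h3 : u = n⁻¹ * (n * u) := by group
      rw [h3]
      exact mul_mem (inv_mem h2) hg
    have hu1 : u = 1 := GW.eq_one_of_both huD (hCCD huCC)
    rw [hu1, mul_one]
    exact hNCN hnNC
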